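/- Let (X, d) be a finite nonempty ultrametric space and let 𝓑 be the set of all closed balls of X. Then the Hausdorff distance restricted to 𝓑 is an ultrametric: d_H(B₁,B₂) ≤ max{d_H(B₁,B₃), d_H(B₃,B₂)} for all closed balls B₁, B₂, B₃. -/

import Mathlib

open Metric

lemma haus_ultra_aux {X : Type*} [MetricSpace X]
    (hu : ∀ x y z : X, dist x z ≤ max (dist x y) (dist y z))
    {A B C : Set X} (hA : A.Nonempty) (hB : B.Nonempty) (hC : C.Nonempty)
    (hAb : Bornology.IsBounded A) (hBb : Bornology.IsBounded B)
    (hCb : Bornology.IsBounded C) :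
    hausdorffDist A B ≤ max (hausdorffDist A C) (hausdorffDist C B) := by
  have hAC : EMetric.hausdorffEdist A C ≠ ⊤ :=
    hausdorffEdist_ne_top_of_nonempty_of_bounded hA hC hAb hCb
  have hCB : EMetric.hausdorffEdist C B ≠ ⊤ :=
    hausdorffEdist_ne_top_of_nonempty_of_bounded hC hB hCb hBb
  set M := max (hausdorffDist A C) (hausdorffDist C B) with hM
  have hM0 : 0 ≤ M := le_max_of_le_left hausdorffDist_nonneg
  refine hausdorffDist_le_of_infDist hM0 ?_ ?_
  · intro x hx
    refine le_of_forall_pos_le_add fun ε hε => ?_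
    have h1 : infDist x C < hausdorffDist A C + ε :=
      lt_of_le_of_lt (infDist_le_hausdorffDist_of_mem hx hAC) (by linarith)
    obtain ⟨c, hcC, hxc⟩ := (infDist_lt_iff hC).1 h1
    have h2 : infDist c B < hausdorffDist C B + ε :=
      lt_of_le_of_lt (infDist_le_hausdorffDist_of_mem hcC hCB) (by linarith)
    obtain ⟨b, hbB, hcb⟩ := (infDist_lt_iff hB).1 h2
    calc infDist x B ≤ dist x b := infDist_le_dist_of_mem hbB
      _ ≤ max (dist x c) (dist c b) := hu x c b
      _ ≤ M + ε := max_le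
          (hxc.le.trans (add_le_add_left (le_max_left _ _) ε))
          (hcb.le.trans (add_le_add_left (le_max_right _ _) ε))
  · intro y hy
    refine le_of_forall_pos_le_add fun ε hε => ?_
    have hBC : EMetric.hausdorffEdist B C ≠ ⊤ := by
      rw [EMetric.hausdorffEdist, Metric.hausdorffEDist_comm]; exact hCB
    have hCA : EMetric.hausdorffEdist C A ≠ ⊤ := by
      rw [EMetric.hausdorffEdist, Metric.hausdorffEDist_comm]; exact hAC
    have h1 : infDist y C < hausdorffDist C B + ε := by
      have := infDist_le_hausdorffDist_of_mem hy hBC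
      rw [hausdorffDist_comm] at this; linarith
    obtain ⟨c, hcC, hyc⟩ := (infDist_lt_iff hC).1 h1
    have h2 : infDist c A < hausdorffDist A C + ε := by
      have := infDist_le_hausdorffDist_of_mem hcC hCA
      rw [hausdorffDist_comm] at this; linarith
    obtain ⟨a, haA, hca⟩ := (infDist_lt_iff hA).1 h2
    calc infDist y A ≤ dist y a := infDist_le_dist_of_mem haA
      _ ≤ max (dist y c) (dist c a) := hu y c a
      _ ≤ M + ε := max_le
          (hyc.le.trans (add_le_add_left (le_max_right _ _) ε))
          (hca.le.trans (add_le_add_left (le_max_left _ _) ε))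

theorem hausdorffDist_ultrametric_on_balls {X : Type*} [MetricSpace X] [Fintype X] [Nonempty X]
    (hu : ∀ x y z : X, dist x z ≤ max (dist x y) (dist y z))
    (c₁ c₂ c₃ : X) (r₁ r₂ r₃ : ℝ) (hr₁ : 0 ≤ r₁) (hr₂ : 0 ≤ r₂) (hr₃ : 0 ≤ r₃) :
    Metric.hausdorffDist (Metric.closedBall c₁ r₁) (Metric.closedBall c₂ r₂) ≤
      max (Metric.hausdorffDist (Metric.closedBall c₁ r₁) (Metric.closedBall c₃ r₃))
        (Metric.hausdorffDist (Metric.closedBall c₃ r₃) (Metric.closedBall c₂ r₂)) := by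
  exact haus_ultra_aux hu (nonempty_closedBall.2 hr₁) (nonempty_closedBall.2 hr₂)
    (nonempty_closedBall.2 hr₃) isBounded_closedBall isBounded_closedBall isBounded_closedBall
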